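/- Let φ_1,…,φ_N be pairwise distinct real numbers with λ = max_j |φ_j|, Δ = min_{i<j} |φ_i − φ_j|, and let R > 0. Define h̄ = R·Δ/(2N²(N+1)) if λ·R ≤ π·N, and h̄ = 2π·Δ/(3λ·N(N+1)) if λ·R > π·N; then h̄ ≤ π/4 in the first case and h̄ ≤ π/3 in the second. There exists s_0 ∈ (0, R/(2N)] such that: (i) for all 1 ≤ i < j ≤ N and all integers m ∈ ℤ, ||φ_i − φ_j|·s_0 − 2π·m| ≥ h̄; and (ii) the points x_j = exp(i·φ_j·s_0), j = 1,…,N, on the unit circle satisfy min_{i≠j} |x_i − x_j| ≥ ρ, where ρ = 3R·Δ/(2π·N²(N+1)) if λ·R ≤ π·N and ρ = 2Δ/(λ·N(N+1)) if λ·R > π·N. -/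

import Mathlib

open Real

lemma sin_lb' {x : ℝ} (hx0 : 0 ≤ x) (hx : x ≤ Real.pi / 6) :
    3 / Real.pi * x ≤ Real.sin x := by
  have hπ := Real.pi_pos
  set t : ℝ := 6 * x / Real.pi with ht
  have ht0 : 0 ≤ t := by positivity
  have ht1 : t ≤ 1 := by rw [ht, div_le_one hπ]; linarith
  have hmem0 : (0:ℝ) ∈ Set.Icc (0:ℝ) Real.pi := Set.mem_Icc.2 ⟨le_rfl, hπ.le⟩
  have hmem6 : Real.pi / 6 ∈ Set.Icc (0:ℝ) Real.pi :=
    Set.mem_Icc.2 ⟨by positivity, by linarith⟩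
  have hc := (strictConcaveOn_sin_Icc.concaveOn).2 hmem0 hmem6
      (by linarith : (0:ℝ) ≤ 1 - t) ht0 (by ring)
  have hx' : (1 - t) • (0:ℝ) + t • (Real.pi / 6) = x := by
    simp only [smul_eq_mul, mul_zero, zero_add, ht]
    field_simp
  rw [hx'] at hc
  have : (1 - t) • Real.sin 0 + t • Real.sin (Real.pi / 6) = 3 / Real.pi * x := by
    simp only [smul_eq_mul, Real.sin_zero, Real.sin_pi_div_six, ht]
    field_simp
    ring
  linarith [this ▸ hc]

lemma aux_exp' (a b : ℝ) :
    ‖Complex.exp (Complex.I * a) - Complex.exp (Complex.I * b)‖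
      = 2 * |Real.sin ((a - b) / 2)| := by
  set c : ℝ := (a + b) / 2
  set d : ℝ := (a - b) / 2
  have key : Complex.exp (Complex.I * a) - Complex.exp (Complex.I * b)
      = Complex.exp (Complex.I * (c : ℂ)) * (2 * (Real.sin d : ℂ) * Complex.I) := by
    have h1 : Complex.I * (a : ℂ) = Complex.I * (c : ℂ) + (d : ℂ) * Complex.I := by
      have : a = c + d := by simp [c, d]; ring
      rw [this]; push_cast; ring
    have h2 : Complex.I * (b : ℂ) = Complex.I * (c : ℂ) + (-d : ℝ) * Complex.I := by
      have : b = c + (-d) := by simp [c, d]; ring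
      rw [this]; push_cast; ring
    rw [h1, h2, Complex.exp_add, Complex.exp_add, ← mul_sub,
      Complex.exp_mul_I, Complex.exp_mul_I]
    rw [Complex.ofReal_neg, Complex.cos_neg, Complex.sin_neg, Complex.ofReal_sin]
    ring
  rw [key, norm_mul, norm_mul, norm_mul, Complex.norm_exp, Complex.norm_I,
    Complex.norm_real, Real.norm_eq_abs, Complex.norm_two]
  have : (Complex.I * (c : ℂ)).re = 0 := by simp
  rw [this, Real.exp_zero]
  ring


lemma key_sep {hbar θ : ℝ} (hb0 : 0 < hbar) (h1 : hbar ≤ θ) (h2 : θ ≤ Real.pi)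
    (m : ℤ) : hbar ≤ |θ - 2 * Real.pi * m| := by
  have hπ := Real.pi_pos
  rcases le_or_gt (m : ℝ) 0 with hm | hm
  · have : hbar ≤ θ - 2 * Real.pi * m := by nlinarith
    exact this.trans (le_abs_self _)
  · have hm1 : (1:ℝ) ≤ (m:ℝ) := by exact_mod_cast hm
    have : hbar ≤ 2 * Real.pi * m - θ := by nlinarith
    calc hbar ≤ 2 * Real.pi * m - θ := this
      _ ≤ |θ - 2 * Real.pi * m| := by rw [abs_sub_comm]; exact le_abs_self _

lemma key_dist {hbar θ : ℝ} (hb0 : 0 < hbar) (hπ3 : hbar ≤ Real.pi / 3)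
    (h1 : hbar ≤ θ) (h2 : θ ≤ Real.pi) :
    3 / Real.pi * hbar ≤ 2 * |Real.sin (θ / 2)| := by
  have hπ := Real.pi_pos
  have hs : |Real.sin (θ / 2)| = Real.sin (θ / 2) :=
    abs_of_nonneg (Real.sin_nonneg_of_nonneg_of_le_pi (by linarith) (by linarith))
  rw [hs]
  have hmono : Real.sin (hbar / 2) ≤ Real.sin (θ / 2) := by
    apply Real.strictMonoOn_sin.monotoneOn (by constructor <;> [linarith; linarith])
      (by constructor <;> [linarith; linarith]) (by linarith)
  have hlb := sin_lb' (x := hbar / 2) (by linarith) (by linarith)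
  calc 3 / Real.pi * hbar = 2 * (3 / Real.pi * (hbar / 2)) := by ring
    _ ≤ 2 * Real.sin (hbar / 2) := by linarith
    _ ≤ 2 * Real.sin (θ / 2) := by linarith

lemma key_pair {N : ℕ} (φ : Fin N → ℝ) (s0 hbar : ℝ) (hs0 : 0 < s0)
    (hb0 : 0 < hbar) (hπ3 : hbar ≤ Real.pi / 3)
    (i j : Fin N)
    (hlow : hbar ≤ |φ i - φ j| * s0) (hhigh : |φ i - φ j| * s0 ≤ Real.pi) :
    3 / Real.pi * hbar ≤ ‖Complex.exp (Complex.I * φ i * s0)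
        - Complex.exp (Complex.I * φ j * s0)‖ := by
  have e1 : Complex.I * (φ i : ℂ) * (s0 : ℂ) = Complex.I * ((φ i * s0 : ℝ) : ℂ) := by
    push_cast; ring
  have e2 : Complex.I * (φ j : ℂ) * (s0 : ℂ) = Complex.I * ((φ j * s0 : ℝ) : ℂ) := by
    push_cast; ring
  rw [e1, e2, aux_exp' (φ i * s0) (φ j * s0)]
  set x : ℝ := (φ i * s0 - φ j * s0) / 2 with hx
  have hxabs : |x| = |φ i - φ j| * s0 / 2 := by
    rw [hx, abs_div, abs_of_pos (by norm_num : (0:ℝ) < 2)]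
    rw [show φ i * s0 - φ j * s0 = (φ i - φ j) * s0 by ring, abs_mul, abs_of_pos hs0]
  have hsinabs : |Real.sin x| = |Real.sin (|x|)| := by
    rcases abs_cases x with ⟨h, _⟩ | ⟨h, _⟩ <;> rw [h] <;> simp [Real.sin_neg]
  have : 2 * |Real.sin x| = 2 * |Real.sin (|φ i - φ j| * s0 / 2)| := by
    rw [hsinabs, hxabs]
  rw [this]
  have := key_dist hb0 hπ3 hlow hhigh
  rwa [show |φ i - φ j| * s0 / 2 = (|φ i - φ j| * s0) / 2 by ring]


set_option maxHeartbeats 1000000 in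
/-- Choice of the auxiliary Prony step `s₀`: for pairwise distinct frequencies
`φ_1,…,φ_N` with `λ = max |φ_j|`, `Δ = min_{i<j} |φ_i - φ_j|`, and `R > 0`, setting
`h̄ = RΔ/(2N²(N+1))` if `λR ≤ πN` and `h̄ = 2πΔ/(3λN(N+1))` otherwise (so `h̄ ≤ π/4`,
resp. `h̄ ≤ π/3`), there exists `s₀ ∈ (0, R/(2N)]` such that all angles `|φ_i - φ_j|s₀`
are `h̄`-separated from integer multiples of `2π`, and the points `x_j = e^{iφ_j s₀}`
on the unit circle satisfy `min_{i≠j} |x_i - x_j| ≥ ρ`, with `ρ = (3/π)h̄`, i.e.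
`ρ = 3RΔ/(2πN²(N+1))` if `λR ≤ πN` and `ρ = 2Δ/(λN(N+1))` otherwise. -/
theorem stmt14
    (N : ℕ) (hN : 0 < N) (φ : Fin N → ℝ) (hφ : Function.Injective φ)
    (lam Δ : ℝ)
    (hlam : IsGreatest (Set.range fun j => |φ j|) lam)
    (hΔ : IsLeast {y : ℝ | ∃ i j, i ≠ j ∧ y = |φ i - φ j|} Δ)
    (R : ℝ) (hR : 0 < R)
    (hbar ρ : ℝ)
    (hh : hbar = if lam * R ≤ Real.pi * N
        then R * Δ / (2 * (N : ℝ) ^ 2 * ((N : ℝ) + 1))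
        else 2 * Real.pi * Δ / (3 * lam * (N : ℝ) * ((N : ℝ) + 1)))
    (hρ : ρ = if lam * R ≤ Real.pi * N
        then 3 * R * Δ / (2 * Real.pi * (N : ℝ) ^ 2 * ((N : ℝ) + 1))
        else 2 * Δ / (lam * (N : ℝ) * ((N : ℝ) + 1))) :
    (if lam * R ≤ Real.pi * N then hbar ≤ Real.pi / 4 else hbar ≤ Real.pi / 3) ∧
    ∃ s0 ∈ Set.Ioc (0 : ℝ) (R / (2 * N)),
      (∀ i j, i ≠ j → ∀ m : ℤ, hbar ≤ abs (|φ i - φ j| * s0 - 2 * Real.pi * m)) ∧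
      (∀ i j, i ≠ j →
        ρ ≤ ‖Complex.exp (Complex.I * φ i * s0)
            - Complex.exp (Complex.I * φ j * s0)‖) := by
  have hπ := Real.pi_pos
  obtain ⟨⟨i0, j0, hij0, hEq⟩, hΔlb⟩ := hΔ
  obtain ⟨-, hlam_ub⟩ := hlam
  have hub : ∀ j, |φ j| ≤ lam := fun j => hlam_ub ⟨j, rfl⟩
  have hΔpos : 0 < Δ := by
    rw [hEq]; exact abs_pos.2 (sub_ne_zero.2 (fun h => hij0 (hφ h)))
  have hΔle : ∀ i j : Fin N, i ≠ j → Δ ≤ |φ i - φ j| := fun i j h => hΔlb ⟨i, j, h, rfl⟩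
  have h2lam : ∀ i j : Fin N, |φ i - φ j| ≤ 2 * lam := fun i j => by
    calc |φ i - φ j| ≤ |φ i| + |φ j| := abs_sub _ _
      _ ≤ 2 * lam := by linarith [hub i, hub j]
  have hΔ2 : Δ ≤ 2 * lam := hEq ▸ h2lam i0 j0
  have hlampos : 0 < lam := by linarith
  have hN2 : (2:ℝ) ≤ (N:ℝ) := by
    have h : Nontrivial (Fin N) := ⟨⟨i0, j0, hij0⟩⟩
    have : 2 ≤ N := by have := Fintype.one_lt_card (α := Fin N); simp at this; omega
    exact_mod_cast this
  have hNpos : (0:ℝ) < (N:ℝ) := by linarith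
  have hNN6 : (0:ℝ) ≤ (N:ℝ) * ((N:ℝ) + 1) - 6 := by nlinarith
  by_cases hc : lam * R ≤ Real.pi * N
  · rw [if_pos hc] at hh hρ
    rw [if_pos hc]
    set s0 : ℝ := R / (2 * (N:ℝ)) with hs0def
    have hs0 : 0 < s0 := by positivity
    have hb0 : 0 < hbar := by rw [hh]; positivity
    have hΔR : Δ * R ≤ 2 * Real.pi * N := by nlinarith
    have hb4 : hbar ≤ Real.pi / 4 := by
      rw [hh, div_le_iff₀ (by positivity)]
      nlinarith [mul_pos hπ hNpos, mul_nonneg (mul_nonneg hπ.le hNpos.le) (by nlinarith : (0:ℝ) ≤ (N:ℝ)*((N:ℝ)+1) - 6)]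
    have hπ3 : hbar ≤ Real.pi / 3 := by linarith
    have hlow : ∀ i j : Fin N, i ≠ j → hbar ≤ |φ i - φ j| * s0 := by
      intro i j hij
      have h1 : Δ ≤ |φ i - φ j| := hΔle i j hij
      have key : hbar ≤ Δ * s0 := by
        rw [hh, div_le_iff₀ (by positivity)]
        have e : Δ * s0 * (2 * (N:ℝ)^2 * ((N:ℝ)+1)) = Δ * R * ((N:ℝ) * ((N:ℝ)+1)) := by
          rw [hs0def]; field_simp
        rw [e]
        nlinarith [mul_pos hΔpos hR]
      calc hbar ≤ Δ * s0 := key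
        _ ≤ |φ i - φ j| * s0 := by nlinarith
    have hhigh : ∀ i j : Fin N, |φ i - φ j| * s0 ≤ Real.pi := by
      intro i j
      have := h2lam i j
      have e : 2 * lam * s0 = lam * R / (N:ℝ) := by rw [hs0def]; field_simp
      calc |φ i - φ j| * s0 ≤ 2 * lam * s0 := by nlinarith
        _ = lam * R / (N:ℝ) := e
        _ ≤ Real.pi := by rw [div_le_iff₀ hNpos]; linarith
    have hρh : ρ = 3 / Real.pi * hbar := by
      rw [hρ, hh]; field_simp
    refine ⟨hb4, s0, ⟨hs0, le_refl _⟩, fun i j hij m => key_sep hb0 (hlow i j hij) (hhigh i j) m,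
      fun i j hij => ?_⟩
    rw [hρh]
    exact key_pair φ s0 hbar hs0 hb0 hπ3 i j (hlow i j hij) (hhigh i j)
  · rw [if_neg hc] at hh hρ
    rw [if_neg hc]
    have hc' : Real.pi * N < lam * R := not_le.1 hc
    set s0 : ℝ := Real.pi / (2 * lam) with hs0def
    have hs0 : 0 < s0 := by positivity
    have hs0le : s0 ≤ R / (2 * (N:ℝ)) := by
      rw [hs0def, div_le_div_iff₀ (by positivity) (by positivity)]
      nlinarith
    have hb0 : 0 < hbar := by rw [hh]; positivity
    have hπ3 : hbar ≤ Real.pi / 3 := by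
      rw [hh, div_le_div_iff₀ (by positivity) (by norm_num : (0:ℝ) < 3)]
      nlinarith [mul_nonneg (mul_nonneg hπ.le hlampos.le) hNN6,
        mul_nonneg hπ.le (by linarith : (0:ℝ) ≤ 2 * lam - Δ),
        mul_pos hπ hlampos]
    have hlow : ∀ i j : Fin N, i ≠ j → hbar ≤ |φ i - φ j| * s0 := by
      intro i j hij
      have h1 : Δ ≤ |φ i - φ j| := hΔle i j hij
      have key : hbar ≤ Δ * s0 := by
        have e : Δ * s0 = Δ * Real.pi / (2 * lam) := by
          rw [hs0def]; ring
        rw [hh, e, div_le_div_iff₀ (by positivity) (by positivity)]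
        nlinarith [mul_nonneg (mul_nonneg (mul_nonneg hπ.le hΔpos.le) hlampos.le) hNN6,
          mul_pos (mul_pos hπ hΔpos) hlampos]
      calc hbar ≤ Δ * s0 := key
        _ ≤ |φ i - φ j| * s0 := by nlinarith
    have hhigh : ∀ i j : Fin N, |φ i - φ j| * s0 ≤ Real.pi := by
      intro i j
      have := h2lam i j
      have e : 2 * lam * s0 = Real.pi := by rw [hs0def]; field_simp
      calc |φ i - φ j| * s0 ≤ 2 * lam * s0 := by nlinarith
        _ = Real.pi := e
    have hρh : ρ = 3 / Real.pi * hbar := by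
      rw [hρ, hh]; field_simp
    refine ⟨hπ3, s0, ⟨hs0, hs0le⟩, fun i j hij m => key_sep hb0 (hlow i j hij) (hhigh i j) m,
      fun i j hij => ?_⟩
    rw [hρh]
    exact key_pair φ s0 hbar hs0 hb0 hπ3 i j (hlow i j hij) (hhigh i j)
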